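/- For all α > 0 and ρ > 0, ∑_{k=0}^∞ e^{-2α} (2α)^k / k! · (1 - e^{-2ρ} (1 + ρ/α)^k)² = e^{2ρ²/α} - 1. In particular, for fixed ρ > 0 this quantity tends to 0 as α → ∞. -/

import Mathlib

open Filter

lemma expHasSum (x : ℝ) : HasSum (fun n : ℕ => x ^ n / n.factorial) (Real.exp x) := by
  rw [Real.exp_eq_exp_ℝ]; exact NormedSpace.expSeries_div_hasSum_exp x

lemma key (a c : ℝ) : HasSum (fun k : ℕ => Real.exp (-a) * a ^ k / k.factorial * c ^ k)
    (Real.exp (a * c - a)) := by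
  have h := (expHasSum (a * c)).mul_left (Real.exp (-a))
  have he : Real.exp (-a) * Real.exp (a * c) = Real.exp (a * c - a) := by
    rw [← Real.exp_add]; ring_nf
  rw [he] at h
  refine h.congr_fun fun k => ?_
  rw [mul_pow]; ring

lemma main (ρ : ℝ) (α : ℝ) (hα : 0 < α) :
    (∑' k : ℕ, Real.exp (-(2 * α)) * (2 * α) ^ k / (Nat.factorial k : ℝ)
        * (1 - Real.exp (-(2 * ρ)) * (1 + ρ / α) ^ k) ^ 2)
      = Real.exp (2 * ρ ^ 2 / α) - 1 := by
  have hα' : α ≠ 0 := ne_of_gt hα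
  have h1 := key (2 * α) 1
  have h2 := (key (2 * α) (1 + ρ / α)).mul_left (2 * Real.exp (-(2 * ρ)))
  have h3 := (key (2 * α) ((1 + ρ / α) ^ 2)).mul_left (Real.exp (-(2 * ρ)) ^ 2)
  have e1 : 2 * α * 1 - 2 * α = 0 := by ring
  have e2 : 2 * α * (1 + ρ / α) - 2 * α = 2 * ρ := by field_simp; ring
  have e3 : 2 * α * (1 + ρ / α) ^ 2 - 2 * α = 4 * ρ + 2 * ρ ^ 2 / α := by
    field_simp; ring
  rw [e1] at h1; rw [e2] at h2; rw [e3] at h3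
  have h := (h1.sub h2).add h3
  have hv : Real.exp 0 - 2 * Real.exp (-(2 * ρ)) * Real.exp (2 * ρ)
      + Real.exp (-(2 * ρ)) ^ 2 * Real.exp (4 * ρ + 2 * ρ ^ 2 / α)
      = Real.exp (2 * ρ ^ 2 / α) - 1 := by
    rw [Real.exp_zero, sq, mul_assoc, ← Real.exp_add, ← Real.exp_add, ← Real.exp_add]
    norm_num
    ring_nf
  rw [hv] at h
  refine HasSum.tsum_eq ?_
  refine h.congr_fun fun k => ?_
  have hp : ((1 + ρ / α) ^ 2) ^ k = ((1 + ρ / α) ^ k) ^ 2 := by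
    rw [← pow_mul, ← pow_mul, mul_comm]
  rw [hp]
  ring

theorem stmt_3 (ρ : ℝ) (hρ : 0 < ρ) :
    (∀ α : ℝ, 0 < α →
      (∑' k : ℕ, Real.exp (-(2 * α)) * (2 * α) ^ k / (Nat.factorial k : ℝ)
        * (1 - Real.exp (-(2 * ρ)) * (1 + ρ / α) ^ k) ^ 2)
      = Real.exp (2 * ρ ^ 2 / α) - 1)
    ∧ Tendsto (fun α : ℝ =>
        ∑' k : ℕ, Real.exp (-(2 * α)) * (2 * α) ^ k / (Nat.factorial k : ℝ)
          * (1 - Real.exp (-(2 * ρ)) * (1 + ρ / α) ^ k) ^ 2)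
      atTop (nhds 0) := by
  refine ⟨fun α hα => main ρ α hα, ?_⟩
  have h0 : Tendsto (fun α : ℝ => 2 * ρ ^ 2 / α) atTop (nhds 0) :=
    tendsto_const_nhds.div_atTop tendsto_id
  have h1 : Tendsto (fun α : ℝ => Real.exp (2 * ρ ^ 2 / α) - 1) atTop (nhds 0) := by
    have := ((Real.continuous_exp.tendsto 0).comp h0).sub_const 1
    simpa using this
  refine Tendsto.congr' ?_ h1
  filter_upwards [eventually_gt_atTop 0] with α hα
  exact (main ρ α hα).symm
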